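/- Let r be a directed graph on a vertex type V, let w_i ≠ w_j be vertices with r w_i w_j and ¬ r w_j w_j, and let N⁻(w_j) := { v | r v w_j } be the set of in-neighbors of w_j. Then for every vertex set D with w_i ∉ D, the following are equivalent: (a) D is a {w_i}–(N⁻(w_j) ∖ {w_i}) disconnecting set; (b) D contains an internal vertex of every parallel path from w_i to w_j, and D contains a vertex of every loop through w_j that does not pass through w_i. -/

import Mathlib

/-- A path in a directed graph `r`: a nonempty duplicate-free list of vertices
in which every pair of consecutive entries is related by `r`. -/
def IsPath {V : Type*} (r : V → V → Prop) (l : List V) : Prop :=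
  l ≠ [] ∧ l.Nodup ∧ l.Chain' r

/-- A path from the vertex set `V1` to the vertex set `V2`. -/
def IsPathFromTo {V : Type*} (r : V → V → Prop) (V1 V2 : Set V) (l : List V) : Prop :=
  IsPath r l ∧ ∀ h : l ≠ [], l.head h ∈ V1 ∧ l.getLast h ∈ V2

/-- `D` is a `V1`–`V2` disconnecting set: every path from `V1` to `V2`
contains a vertex of `D`. -/
def Disconnects {V : Type*} (r : V → V → Prop) (V1 V2 D : Set V) : Prop :=
  ∀ l : List V, IsPathFromTo r V1 V2 l → ∃ v ∈ D, v ∈ l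

/-- A loop through `wj` with (nonempty) list `m` of intermediate vertices:
the list `wj :: m ++ [wj]` is a chain for `r`, and the vertices `wj :: m`
are pairwise distinct.  Its vertices are the entries of `wj :: m`. -/
def IsLoopThrough {V : Type*} (r : V → V → Prop) (wj : V) (m : List V) : Prop :=
  m ≠ [] ∧ (wj :: m).Nodup ∧ (wj :: (m ++ [wj])).Chain' r

private lemma head_eq_getLast_nodup {V : Type*} {l : List V} (h : l ≠ []) (hnd : l.Nodup)
    (he : l.head h = l.getLast h) : l = [l.head h] := by
  match l with
  | [a] => simp
  | a :: b :: t =>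
      exfalso
      rw [List.head_cons, List.getLast_cons (l := b :: t) (by simp)] at he
      have hmem : a ∈ b :: t := he ▸ List.getLast_mem (by simp)
      exact (List.nodup_cons.mp hnd).1 hmem

theorem stmt11 {V : Type*} (r : V → V → Prop) (wi wj : V)
    (hne : wi ≠ wj) (hedge : r wi wj) (hnoself : ¬ r wj wj)
    (D : Set V) (hwiD : wi ∉ D) :
    Disconnects r {wi} ({v | r v wj} \ {wi}) D ↔
      ((∀ l : List V, IsPathFromTo r {wi} {wj} l → l ≠ [wi, wj] →
          ∃ v ∈ D, v ∈ l.tail.dropLast) ∧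
       (∀ m : List V, IsLoopThrough r wj m → wi ∉ wj :: m →
          ∃ v ∈ D, v ∈ wj :: m)) := by
  constructor
  · intro hD
    constructor
    · rintro l ⟨⟨hnil, hnd, hch⟩, hends⟩ hne2
      obtain ⟨hhead, hlast⟩ := hends hnil
      simp only [Set.mem_singleton_iff] at hhead hlast
      obtain ⟨l', rfl⟩ : ∃ l', l = l' ++ [wj] :=
        ⟨l.dropLast, by conv_lhs => rw [← List.dropLast_append_getLast hnil, hlast]⟩
      have hl' : l' ≠ [] := by
        rintro rfl
        simp at hhead
        exact hne hhead.symm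
      have hhead' : l'.head hl' = wi := by
        rw [List.head_append, dif_neg (by simp [hl'])] at hhead
        exact hhead
      obtain ⟨hnd', -, hdisj⟩ := List.nodup_append.mp hnd
      obtain ⟨hch', -, hlink⟩ := List.isChain_append.mp hch
      have hr : r (l'.getLast hl') wj :=
        hlink _ (by rw [List.getLast?_eq_getLast hl']; rfl) _ rfl
      have hglne : l'.getLast hl' ≠ wi := by
        intro h
        have h1 := head_eq_getLast_nodup hl' hnd' (by rw [hhead', h])
        rw [hhead'] at h1
        exact hne2 (by rw [h1]; rfl)
      obtain ⟨d, hdD, hdl⟩ := hD l' ⟨⟨hl', hnd', hch'⟩, fun h =>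
        ⟨by simp [hhead'], ⟨hr, by simpa using hglne⟩⟩⟩
      refine ⟨d, hdD, ?_⟩
      have heq : (l' ++ [wj]).tail.dropLast = l'.tail := by
        rw [← List.tail_dropLast, List.dropLast_concat]
      rw [heq]
      have hd_ne : d ≠ wi := fun h => hwiD (h ▸ hdD)
      rw [← List.cons_head_tail hl'] at hdl
      rcases List.mem_cons.mp hdl with h | h
      · exact absurd (h.trans hhead') hd_ne
      · exact h
    · rintro m ⟨hmne, hnodm, hchm⟩ hwim
      have hch2 : ((wj :: m) ++ [wj]).Chain' r := by simpa using hchm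
      obtain ⟨hc1, -, hlink⟩ := List.isChain_append.mp hch2
      have hr : r (m.getLast hmne) wj := by
        have h := hlink ((wj :: m).getLast (by simp))
          (by rw [List.getLast?_eq_getLast (by simp : wj :: m ≠ [])]; rfl) wj rfl
        rwa [List.getLast_cons hmne] at h
      obtain ⟨d, hdD, hdl⟩ := hD (wi :: wj :: m) ⟨⟨by simp,
        List.nodup_cons.mpr ⟨hwim, hnodm⟩,
        List.isChain_cons_cons.mpr ⟨hedge, hc1⟩⟩, fun h => by
          refine ⟨rfl, ?_⟩
          rw [List.getLast_cons (by simp : wj :: m ≠ []), List.getLast_cons hmne]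
          refine ⟨hr, ?_⟩
          simp only [Set.mem_singleton_iff]
          intro hgl
          exact hwim (hgl ▸ List.mem_cons_of_mem _ (List.getLast_mem hmne))⟩
      refine ⟨d, hdD, ?_⟩
      have hd_ne : d ≠ wi := fun h => hwiD (h ▸ hdD)
      rcases List.mem_cons.mp hdl with h | h
      · exact absurd h hd_ne
      · exact h
  · rintro ⟨h1, h2⟩ l ⟨⟨hnil, hnd, hch⟩, hends⟩
    obtain ⟨hhead, hlast⟩ := hends hnil
    simp only [Set.mem_singleton_iff] at hhead
    obtain ⟨hrv, hvne⟩ := hlast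
    simp only [Set.mem_setOf_eq] at hrv
    simp only [Set.mem_singleton_iff] at hvne
    by_cases hwj : wj ∈ l
    · obtain ⟨l1, l2, rfl⟩ := List.append_of_mem hwj
      obtain ⟨hnd1, hnd2, hdisj⟩ := List.nodup_append'.mp hnd
      have hl1 : l1 ≠ [] := by
        rintro rfl
        simp at hhead
        exact hne hhead.symm
      have hwiin : wi ∈ l1 := by
        rw [List.head_append, dif_neg (by simp [hl1])] at hhead
        exact hhead ▸ List.head_mem hl1
      have hwinot : wi ∉ wj :: l2 := fun h => hdisj hwiin h
      have hl2 : l2 ≠ [] := by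
        rintro rfl
        rw [List.getLast_concat] at hrv
        exact hnoself hrv
      have hgl : (l1 ++ wj :: l2).getLast hnil = l2.getLast hl2 := by
        rw [List.getLast_append, dif_neg (by simp), List.getLast_cons hl2]
      rw [hgl] at hrv
      obtain ⟨-, hc2, -⟩ := List.isChain_append.mp hch
      have hloop : IsLoopThrough r wj l2 := by
        refine ⟨hl2, hnd2, ?_⟩
        rw [show wj :: (l2 ++ [wj]) = (wj :: l2) ++ [wj] by simp]
        show List.IsChain r _
        rw [List.isChain_append]
        refine ⟨hc2, List.isChain_singleton _, ?_⟩
        intro x hx y hy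
        rw [List.getLast?_eq_getLast (by simp : wj :: l2 ≠ []), Option.mem_def,
          Option.some.injEq] at hx
        simp only [List.head?_cons, Option.mem_def, Option.some.injEq] at hy
        subst hx; subst hy
        rw [List.getLast_cons hl2]
        exact hrv
      obtain ⟨d, hdD, hdm⟩ := h2 l2 hloop hwinot
      exact ⟨d, hdD, List.mem_append_right _ hdm⟩
    · have hpp : IsPathFromTo r {wi} {wj} (l ++ [wj]) := by
        refine ⟨⟨by simp, ?_, ?_⟩, fun h => ?_⟩
        · rw [List.nodup_append']
          exact ⟨hnd, List.nodup_singleton _, fun x hx hx' => by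
            simp at hx'; exact hwj (hx' ▸ hx)⟩
        · show List.IsChain r _
          rw [List.isChain_append]
          refine ⟨hch, List.isChain_singleton _, ?_⟩
          intro x hx y hy
          rw [List.getLast?_eq_getLast hnil, Option.mem_def, Option.some.injEq] at hx
          simp only [List.head?_cons, Option.mem_def, Option.some.injEq] at hy
          subst hx; subst hy
          exact hrv
        · constructor
          · rw [List.head_append, dif_neg (by simp [hnil])]
            simpa using hhead
          · simp [List.getLast_concat]
      have hne2 : l ++ [wj] ≠ [wi, wj] := by
        intro h
        have h' : l = [wi] := by
          have := congrArg List.dropLast h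
          simpa [List.dropLast_concat] using this
        subst h'
        simp at hvne
      obtain ⟨d, hdD, hdl⟩ := h1 _ hpp hne2
      have heq : (l ++ [wj]).tail.dropLast = l.tail := by
        rw [← List.tail_dropLast, List.dropLast_concat]
      rw [heq] at hdl
      exact ⟨d, hdD, List.mem_of_mem_tail hdl⟩
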